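/- For every real σ with 1 < σ ≤ 2, we have -ζ'(σ)/ζ(σ) < 1/(σ - 1), where ζ is the Riemann zeta function. -/

import Mathlib

open Complex

private lemma aux_step_le (f g : ℝ → ℝ) (x : ℝ)
    (hd : ∀ t ∈ Set.Icc x (x+1), HasDerivAt g (-(f t)) t)
    (hm : ∀ t ∈ Set.Ioo x (x+1), f (x+1) ≤ f t) :
    f (x+1) ≤ g x - g (x+1) := by
  obtain ⟨c, hc, hceq⟩ := exists_hasDerivAt_eq_slope g (fun t => -(f t))
    (by linarith : x < x + 1)
    (fun t ht => (hd t ht).continuousAt.continuousWithinAt)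
    (fun t ht => hd t (Set.mem_Icc_of_Ioo ht))
  have h1 : x + 1 - x = 1 := by ring
  rw [h1, div_one] at hceq
  have := hm c hc
  linarith

private lemma aux_step_ge (f g : ℝ → ℝ) (x : ℝ)
    (hd : ∀ t ∈ Set.Icc x (x+1), HasDerivAt g (-(f t)) t)
    (hm : ∀ t ∈ Set.Ioo x (x+1), f t ≤ f x) :
    g x - g (x+1) ≤ f x := by
  obtain ⟨c, hc, hceq⟩ := exists_hasDerivAt_eq_slope g (fun t => -(f t))
    (by linarith : x < x + 1)
    (fun t ht => (hd t ht).continuousAt.continuousWithinAt)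
    (fun t ht => hd t (Set.mem_Icc_of_Ioo ht))
  have h1 : x + 1 - x = 1 := by ring
  rw [h1, div_one] at hceq
  have := hm c hc
  linarith

private lemma aux_Gg_deriv (σ : ℝ) (hσ : 1 < σ) {x : ℝ} (hx : 0 < x) :
    HasDerivAt (fun y : ℝ => y^(1-σ)*Real.log y/(σ-1) + y^(1-σ)/(σ-1)^2)
      (-(Real.log x / x^σ)) x := by
  have hrp : HasDerivAt (fun y : ℝ => y^(1-σ)) ((1-σ) * x^(-σ)) x := by
    have := Real.hasDerivAt_rpow_const (p := 1-σ) (Or.inl hx.ne')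
    convert this using 2
    ring_nf
  have hlog : HasDerivAt Real.log x⁻¹ x := Real.hasDerivAt_log hx.ne'
  have h := ((hrp.mul hlog).div_const (σ-1)).add (hrp.div_const ((σ-1)^2))
  refine h.congr_deriv (Eq.symm ?_)
  have e1 : x ^ (1-σ) = x * x^(-σ) := by
    rw [show (1:ℝ)-σ = 1 + (-σ) by ring, Real.rpow_add hx, Real.rpow_one]
  have e2 : x ^ (-σ) = (x^σ)⁻¹ := Real.rpow_neg hx.le σ
  have hxσ : x ^ σ ≠ 0 := by positivity
  have hσ1 : σ - 1 ≠ 0 := by linarith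
  rw [e1, e2]
  field_simp
  ring

private lemma aux_G2_deriv (σ : ℝ) (hσ : 1 < σ) {x : ℝ} (hx : 0 < x) :
    HasDerivAt (fun y : ℝ => y^(1-σ)/(σ-1)) (-(1 / x^σ)) x := by
  have hrp : HasDerivAt (fun y : ℝ => y^(1-σ)) ((1-σ) * x^(-σ)) x := by
    have := Real.hasDerivAt_rpow_const (p := 1-σ) (Or.inl hx.ne')
    convert this using 2
    ring_nf
  have h := hrp.div_const (σ-1)
  refine h.congr_deriv (Eq.symm ?_)
  have e2 : x ^ (-σ) = (x^σ)⁻¹ := Real.rpow_neg hx.le σ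
  have hxσ : x ^ σ ≠ 0 := by positivity
  have hσ1 : σ - 1 ≠ 0 := by linarith
  rw [e2]
  field_simp
  ring

private lemma aux_anti (σ : ℝ) (hσ : 1 < σ) {s t : ℝ} (hs : 3 ≤ s) (hst : s ≤ t) :
    Real.log t / t^σ ≤ Real.log s / s^σ := by
  have hs0 : (0:ℝ) < s := by linarith
  have ht0 : (0:ℝ) < t := by linarith
  have he : Real.exp 1 ≤ 3 := by
    have := Real.exp_one_lt_d9
    linarith
  have key : ∀ x : ℝ, 3 ≤ x → Real.log x / x^σ = (Real.log x / x) * x^(-(σ-1)) := by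
    intro x hx
    have hx0 : (0:ℝ) < x := by linarith
    have e1 : x ^ σ = x * x^(σ-1) := by
      rw [show σ = 1 + (σ-1) by ring, Real.rpow_add hx0, Real.rpow_one]
      ring_nf
    have e2 : x ^ (-(σ-1)) = (x^(σ-1))⁻¹ := Real.rpow_neg hx0.le _
    have h1 : x ^ (σ-1) ≠ 0 := by positivity
    rw [e1, e2]
    field_simp
  rw [key s hs, key t (le_trans hs hst)]
  have ha : Real.log t / t ≤ Real.log s / s :=
    Real.log_div_self_antitoneOn (by exact le_trans he hs)
      (by exact le_trans he (le_trans hs hst)) hst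
  have hb : t ^ (-(σ-1)) ≤ s ^ (-(σ-1)) :=
    Real.rpow_le_rpow_of_nonpos hs0 hst (by linarith)
  have hc : 0 ≤ Real.log s / s := by
    apply div_nonneg _ hs0.le
    exact Real.log_nonneg (by linarith)
  exact mul_le_mul ha hb (by positivity) hc

private lemma aux_tailD (σ : ℝ) (h1 : 1 < σ) :
    ∑' n : ℕ, Real.log ((n+4:ℕ)) / ((n+4:ℕ):ℝ)^σ
      ≤ (3:ℝ)^(1-σ)*Real.log 3/(σ-1) + (3:ℝ)^(1-σ)/(σ-1)^2 := by
  set F : ℕ → ℝ := fun j => ((j:ℝ)+3)^(1-σ)*Real.log ((j:ℝ)+3)/(σ-1)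
    + ((j:ℝ)+3)^(1-σ)/(σ-1)^2 with hF
  have hFnonneg : ∀ j : ℕ, 0 ≤ F j := by
    intro j
    have h3 : (1:ℝ) ≤ (j:ℝ)+3 := by
      have := Nat.cast_nonneg (α := ℝ) j; linarith
    have hl : 0 ≤ Real.log ((j:ℝ)+3) := Real.log_nonneg h3
    have hr : 0 ≤ ((j:ℝ)+3)^(1-σ) := Real.rpow_nonneg (by linarith) _
    have hs : (0:ℝ) < σ - 1 := by linarith
    rw [hF]
    positivity
  have key : ∀ i : ℕ, Real.log ((i+4:ℕ)) / ((i+4:ℕ):ℝ)^σ ≤ F i - F (i+1) := by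
    intro i
    have h3le : (3:ℝ) ≤ (i:ℝ)+3 := by
      have := Nat.cast_nonneg (α := ℝ) i; linarith
    have happ := aux_step_le (fun t => Real.log t / t^σ)
      (fun y : ℝ => y^(1-σ)*Real.log y/(σ-1) + y^(1-σ)/(σ-1)^2) ((i:ℝ)+3)
      (fun t ht => aux_Gg_deriv σ h1 (by
        have := ht.1; linarith : (0:ℝ) < t))
      (fun t ht => aux_anti σ h1 (by linarith [ht.1] : (3:ℝ) ≤ t) (le_of_lt ht.2))
    have hcast : ((i+4:ℕ):ℝ) = ((i:ℝ)+3)+1 := by push_cast; ring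
    have hcast2 : ((i+1:ℕ):ℝ)+3 = ((i:ℝ)+3)+1 := by push_cast; ring
    rw [hF]
    simp only [hcast, hcast2]
    simpa using happ
  apply Real.tsum_le_of_sum_range_le
  · intro n
    apply div_nonneg _ (Real.rpow_nonneg (Nat.cast_nonneg _) _)
    apply Real.log_nonneg
    push_cast
    have := Nat.cast_nonneg (α := ℝ) n; linarith
  · intro N
    calc ∑ i ∈ Finset.range N, Real.log ((i+4:ℕ)) / ((i+4:ℕ):ℝ)^σ
        ≤ ∑ i ∈ Finset.range N, (F i - F (i+1)) :=
          Finset.sum_le_sum (fun i _ => key i)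
      _ = F 0 - F N := Finset.sum_range_sub' F N
      _ ≤ F 0 := by linarith [hFnonneg N]
      _ = (3:ℝ)^(1-σ)*Real.log 3/(σ-1) + (3:ℝ)^(1-σ)/(σ-1)^2 := by
          rw [hF]; norm_num

private lemma aux_tailZ (σ : ℝ) (h1 : 1 < σ)
    (hsum : Summable (fun n : ℕ => 1 / ((n+4:ℕ):ℝ)^σ)) :
    (4:ℝ)^(1-σ)/(σ-1) ≤ ∑' n : ℕ, 1 / ((n+4:ℕ):ℝ)^σ := by
  set F : ℕ → ℝ := fun j => ((j:ℝ)+4)^(1-σ)/(σ-1) with hF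
  have key : ∀ i : ℕ, F i - F (i+1) ≤ 1 / ((i+4:ℕ):ℝ)^σ := by
    intro i
    have h4le : (4:ℝ) ≤ (i:ℝ)+4 := by
      have := Nat.cast_nonneg (α := ℝ) i; linarith
    have happ := aux_step_ge (fun t => 1 / t^σ)
      (fun y : ℝ => y^(1-σ)/(σ-1)) ((i:ℝ)+4)
      (fun t ht => aux_G2_deriv σ h1 (by
        have := ht.1; linarith : (0:ℝ) < t))
      (fun t ht => by
        have hx0 : (0:ℝ) < (i:ℝ)+4 := by linarith
        have ht0 : (0:ℝ) < t := by linarith [ht.1]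
        have hp : ((i:ℝ)+4)^σ ≤ t^σ :=
          Real.rpow_le_rpow hx0.le (le_of_lt ht.1) (by linarith)
        have hq : (0:ℝ) < ((i:ℝ)+4)^σ := Real.rpow_pos_of_pos hx0 σ
        exact one_div_le_one_div_of_le hq hp)
    have hcast : ((i+4:ℕ):ℝ) = (i:ℝ)+4 := by push_cast; ring
    have hcast2 : ((i+1:ℕ):ℝ)+4 = ((i:ℝ)+4)+1 := by push_cast; ring
    rw [hF]
    simp only [hcast, hcast2]
    simpa using happ
  have hpart : ∀ N : ℕ, F 0 - F N ≤ ∑' n : ℕ, 1 / ((n+4:ℕ):ℝ)^σ := by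
    intro N
    calc F 0 - F N = ∑ i ∈ Finset.range N, (F i - F (i+1)) :=
          (Finset.sum_range_sub' F N).symm
      _ ≤ ∑ i ∈ Finset.range N, 1 / ((i+4:ℕ):ℝ)^σ :=
          Finset.sum_le_sum (fun i _ => key i)
      _ ≤ ∑' n : ℕ, 1 / ((n+4:ℕ):ℝ)^σ :=
          Summable.sum_le_tsum _ (fun i _ => by positivity) hsum
  have hlim : Filter.Tendsto (fun N : ℕ => F 0 - F N) Filter.atTop (nhds (F 0 - 0)) := by
    apply Filter.Tendsto.sub tendsto_const_nhds
    have h0 : Filter.Tendsto (fun N : ℕ => ((N:ℝ)+4)^(-(σ-1))) Filter.atTop (nhds 0) :=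
      (tendsto_rpow_neg_atTop (by linarith)).comp
        (Filter.tendsto_atTop_add_const_right Filter.atTop 4 tendsto_natCast_atTop_atTop)
    have heq : F = fun N : ℕ => ((N:ℝ)+4)^(-(σ-1))/(σ-1) := by
      funext N
      simp only [hF]
      congr 2
      ring
    rw [heq, show (0:ℝ) = 0/(σ-1) by simp]
    exact h0.div_const _
  rw [sub_zero] at hlim
  have := le_of_tendsto hlim (Filter.Eventually.of_forall hpart)
  calc (4:ℝ)^(1-σ)/(σ-1) = F 0 := by rw [hF]; norm_num
    _ ≤ _ := this


private lemma aux_poly (a : ℝ) (ha0 : 0 < a) (ha1 : a ≤ 1) :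
    0 < (11/6)*a + (7/6)*a*a + (3/4)*a*a^2 + a^2/2
      - (6932/10000*a)*(a+2)*(1+11/10*a+(11/10*a)^2/2)
      + (6931/10000*a)^2*(a/2+1)*(1+a+a^2/2) := by
  have hid2 : (11/6)*a + (7/6)*a*a + (3/4)*a*a^2 + a^2/2
      - (6932/10000*a)*(a+2)*(1+11/10*a+(11/10*a)^2/2)
      + (6931/10000*a)^2*(a/2+1)*(1+a+a^2/2)
      = (838/1875)*a - (21355717/300000000)*a^2 - (26142117/200000000)*a^3
        + (6100161/100000000)*a^4 + (48038761/400000000)*a^5 := by ring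
  rw [hid2]
  have h2 : a^2 ≤ a := by
    have := pow_le_pow_of_le_one ha0.le ha1 (by norm_num : 1 ≤ 2)
    simpa using this
  have h3 : a^3 ≤ a := by
    have := pow_le_pow_of_le_one ha0.le ha1 (by norm_num : 1 ≤ 3)
    simpa using this
  have h4 : (0:ℝ) ≤ a^4 := by positivity
  have h5 : (0:ℝ) ≤ a^5 := by positivity
  linarith

set_option maxHeartbeats 1000000 in
private lemma aux_final (a L2 L3 X Y : ℝ) (ha0 : 0 < a) (ha1 : a ≤ 1)
    (hL2a : 6931/10000 < L2) (hL2b : L2 < 6932/10000) (hL3a : 1 < L3) (hL3b : L3 < 11/10)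
    (hX0 : 0 < X) (hX1 : 1 - a*L2 ≤ X) (hY0 : 0 < Y)
    (hYS : Y * (1 + a*L3 + (a*L3)^2/2 + (a*L3)^3/6) ≤ 1) :
    a^2*(L2*X/2 + L3*Y/3) + a*L3*Y + Y < a*(1 + X/2 + Y/3) + X^2 := by
  have hx0 : 0 < a*L3 := by nlinarith
  have hx1 : a ≤ a*L3 := by nlinarith
  have hx2 : a*L3 ≤ 11/10*a := by nlinarith
  have hy2 : a*L2 ≤ 6932/10000*a := by nlinarith
  have hy1 : 6931/10000*a ≤ a*L2 := by nlinarith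
  have hw : 0 ≤ 1 - a*L2 := by nlinarith
  have hS0 : (0:ℝ) < 1 + a*L3 + (a*L3)^2/2 + (a*L3)^3/6 := by positivity
  have hYle : Y ≤ 1/(1 + a*L3 + (a*L3)^2/2 + (a*L3)^3/6) := by
    rw [le_div_iff₀ hS0]; linarith
  -- X-side bounds
  have hXterm : (a/2)*(1-a*L2)^2 ≤ a*X/2 - a^2*L2*X/2 := by
    have h := mul_le_mul_of_nonneg_left hX1 (mul_nonneg (by linarith : (0:ℝ) ≤ a/2) hw)
    have e1 : a/2*(1-a*L2)*(1-a*L2) = (a/2)*(1-a*L2)^2 := by ring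
    have e2 : a/2*(1-a*L2)*X = a*X/2 - a^2*L2*X/2 := by ring
    rw [e1, e2] at h
    exact h
  have hX2 : (1-a*L2)^2 ≤ X^2 := pow_le_pow_left₀ hw hX1 2
  -- Y-side bound
  have hc3 : a/3 - a*(a*L3)/3 - a*L3 - 1 < 0 := by nlinarith
  have hYterm : (a/3 - a*(a*L3)/3 - a*L3 - 1)/(1 + a*L3 + (a*L3)^2/2 + (a*L3)^3/6)
      ≤ a*Y/3 - a^2*L3*Y/3 - a*L3*Y - Y := by
    have h := mul_le_mul_of_nonpos_left hYle hc3.le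
    rw [mul_one_div] at h
    have e1 : (a/3 - a*(a*L3)/3 - a*L3 - 1)*Y = a*Y/3 - a^2*L3*Y/3 - a*L3*Y - Y := by ring
    rw [e1] at h
    exact h
  -- main positivity
  have hN : 0 < (a + (a/2)*(1-a*L2)^2 + (1-a*L2)^2)
      * (1 + a*L3 + (a*L3)^2/2 + (a*L3)^3/6) + (a/3 - a*(a*L3)/3 - a*L3 - 1) := by
    have hid : (a + (a/2)*(1-a*L2)^2 + (1-a*L2)^2)
        * (1 + a*L3 + (a*L3)^2/2 + (a*L3)^3/6) + (a/3 - a*(a*L3)/3 - a*L3 - 1)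
        = ((11/6)*a + (7/6)*a*(a*L3) + (3/4)*a*(a*L3)^2 + (a*L3)^2/2
            - (a*L2)*(a+2)*(1+(a*L3)+(a*L3)^2/2)
            + (a*L2)^2*(a/2+1)*(1+(a*L3)+(a*L3)^2/2))
          + (a + (a/2)*(1-a*L2)^2 + (1-a*L2)^2) * ((a*L3)^3/6) := by ring
    rw [hid]
    have hlast : 0 ≤ (a + (a/2)*(1-a*L2)^2 + (1-a*L2)^2) * ((a*L3)^3/6) := by positivity
    have hsq1 : (a*L3)^2 ≤ (11/10*a)^2 := pow_le_pow_left₀ hx0.le hx2 2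
    have hsq2 : a^2 ≤ (a*L3)^2 := by
      have := pow_le_pow_left₀ ha0.le hx1 2
      simpa using this
    have hm1 : 1+(a*L3)+(a*L3)^2/2 ≤ 1+11/10*a+(11/10*a)^2/2 := by linarith
    have hm2 : 1+a+a^2/2 ≤ 1+(a*L3)+(a*L3)^2/2 := by linarith
    have ht4 : (a*L2)*(a+2)*(1+(a*L3)+(a*L3)^2/2)
        ≤ (6932/10000*a)*(a+2)*(1+11/10*a+(11/10*a)^2/2) := by
      have h1 : (a*L2)*(a+2) ≤ (6932/10000*a)*(a+2) := by nlinarith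
      exact mul_le_mul h1 hm1 (by positivity) (by positivity)
    have ht5 : (6931/10000*a)^2*(a/2+1)*(1+a+a^2/2)
        ≤ (a*L2)^2*(a/2+1)*(1+(a*L3)+(a*L3)^2/2) := by
      have h0 : (6931/10000*a)^2 ≤ (a*L2)^2 :=
        pow_le_pow_left₀ (by positivity) hy1 2
      have h1 : (6931/10000*a)^2*(a/2+1) ≤ (a*L2)^2*(a/2+1) := by nlinarith
      exact mul_le_mul h1 hm2 (by positivity) (by positivity)
    have ht2 : (7/6)*a*a ≤ (7/6)*a*(a*L3) := by nlinarith
    have ht3 : (3/4)*a*a^2 ≤ (3/4)*a*(a*L3)^2 := by nlinarith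
    have ht6 : a^2/2 ≤ (a*L3)^2/2 := by linarith
    have hpoly := aux_poly a ha0 ha1
    linarith
  have main : 0 < a + (a/2)*(1-a*L2)^2 + (1-a*L2)^2
      + (a/3 - a*(a*L3)/3 - a*L3 - 1)/(1 + a*L3 + (a*L3)^2/2 + (a*L3)^3/6) := by
    have hE : a + (a/2)*(1-a*L2)^2 + (1-a*L2)^2
        + (a/3 - a*(a*L3)/3 - a*L3 - 1)/(1 + a*L3 + (a*L3)^2/2 + (a*L3)^3/6)
        = ((a + (a/2)*(1-a*L2)^2 + (1-a*L2)^2)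
            * (1 + a*L3 + (a*L3)^2/2 + (a*L3)^3/6) + (a/3 - a*(a*L3)/3 - a*L3 - 1))
          / (1 + a*L3 + (a*L3)^2/2 + (a*L3)^3/6) := by
      field_simp
    rw [hE]
    exact div_pos hN hS0
  have eL : a^2*(L2*X/2 + L3*Y/3) + a*L3*Y + Y
      = (a^2*L2*X/2) + (a^2*L3*Y/3 + a*L3*Y + Y) := by ring
  have eR : a*(1 + X/2 + Y/3) + X^2 = a + a*X/2 + a*Y/3 + X^2 := by ring
  rw [eL, eR]
  linarith [hXterm, hX2, hYterm, main]

set_option maxHeartbeats 1000000 in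
/-- For every real `σ` with `1 < σ ≤ 2`, we have `-ζ'(σ)/ζ(σ) < 1/(σ - 1)`. -/
theorem neg_zeta_logDeriv_lt (σ : ℝ) (h1 : 1 < σ) (h2 : σ ≤ 2) :
    -(deriv riemannZeta σ / riemannZeta σ).re < 1 / (σ - 1) := by
  have hσ0 : (0:ℝ) < σ := by linarith
  set Z : ℝ := ∑' n : ℕ, 1 / (n : ℝ) ^ σ with hZdef
  set D : ℝ := ∑' n : ℕ, Real.log n / (n : ℝ) ^ σ with hDdef
  have hre : ((σ : ℂ)).re = σ := Complex.ofReal_re σ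
  have hres : 1 < ((σ:ℂ)).re := by rw [hre]; exact h1
  -- termwise identities
  have hterm1 : ∀ n : ℕ, LSeries.term 1 (σ:ℂ) n = ((1 / (n:ℝ) ^ σ : ℝ) : ℂ) := by
    intro n
    rw [LSeries.term_def]
    rcases Nat.eq_zero_or_pos n with rfl | hn
    · simp [Real.zero_rpow (by positivity : σ ≠ 0)]
    · have h0 : (0:ℝ) ≤ (n:ℝ) := by positivity
      rw [if_neg hn.ne', Pi.one_apply, Complex.ofReal_div, Complex.ofReal_one,
        Complex.ofReal_cpow h0, Complex.ofReal_natCast]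
  have hterm2 : ∀ n : ℕ, LSeries.term (LSeries.logMul 1) (σ:ℂ) n
      = ((Real.log n / (n:ℝ) ^ σ : ℝ) : ℂ) := by
    intro n
    rw [LSeries.term_def]
    rcases Nat.eq_zero_or_pos n with rfl | hn
    · simp [Real.zero_rpow (by positivity : σ ≠ 0)]
    · have h0 : (0:ℝ) ≤ (n:ℝ) := by positivity
      rw [if_neg hn.ne']
      simp only [LSeries.logMul, Pi.one_apply, mul_one]
      rw [Complex.ofReal_div, Complex.ofReal_cpow h0, Complex.ofReal_natCast,
        ← Complex.natCast_log]
  have habs : LSeries.abscissaOfAbsConv 1 < ((σ:ℂ)).re := by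
    rw [LSeries.abscissaOfAbsConv_one, hre]
    exact_mod_cast h1
  -- ζ σ = Z
  have hzeta : riemannZeta (σ:ℂ) = ((Z : ℝ) : ℂ) := by
    rw [← LSeries_one_eq_riemannZeta hres, LSeries, hZdef, Complex.ofReal_tsum]
    exact tsum_congr fun n => hterm1 n
  -- deriv ζ σ = -D
  have hderiv : deriv riemannZeta (σ:ℂ) = ((-D : ℝ) : ℂ) := by
    have hev : deriv riemannZeta (σ:ℂ) = deriv (LSeries 1) (σ:ℂ) := by
      refine (Filter.EventuallyEq.deriv_eq ?_).symm
      refine Filter.eventuallyEq_iff_exists_mem.mpr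
        ⟨{z | 1 < z.re}, (isOpen_lt continuous_const Complex.continuous_re).mem_nhds hres,
          fun z hz => LSeries_one_eq_riemannZeta hz⟩
    rw [hev, LSeries_deriv habs, LSeries]
    have hD : ∑' n : ℕ, LSeries.term (LSeries.logMul 1) (σ:ℂ) n = ((D : ℝ) : ℂ) := by
      rw [hDdef, Complex.ofReal_tsum]
      exact tsum_congr hterm2
    rw [hD]
    push_cast
    ring
  -- summabilities
  have hZsum : Summable (fun n : ℕ => 1 / (n:ℝ) ^ σ) :=
    Real.summable_one_div_nat_rpow.mpr h1
  have hDsum : Summable (fun n : ℕ => Real.log n / (n:ℝ) ^ σ) := by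
    have hc : Summable (fun n : ℕ => LSeries.term (LSeries.logMul 1) (σ:ℂ) n) :=
      LSeriesSummable_logMul_of_lt_re habs
    rw [← Complex.summable_ofReal]
    exact (summable_congr hterm2).mp hc
  -- positivity of Z
  have hZ1 : (1:ℝ) ≤ Z := by
    have h0 : ∀ n : ℕ, 0 ≤ 1 / (n:ℝ) ^ σ := fun n => by positivity
    have := Summable.le_tsum hZsum 1 (fun m _ => h0 m)
    rw [hZdef]
    refine le_trans (le_of_eq ?_) this
    norm_num
  have hZpos : (0:ℝ) < Z := lt_of_lt_of_le one_pos hZ1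
  -- reduce goal
  rw [hzeta, hderiv, ← Complex.ofReal_div, Complex.ofReal_re, neg_div, neg_neg,
    div_lt_div_iff₀ hZpos (by linarith : (0:ℝ) < σ - 1)]
  -- now: D * (σ - 1) < 1 * Z
  clear hterm1 hterm2 hzeta hderiv habs hres hre
  rw [one_mul]
  have ha0 : (0:ℝ) < σ - 1 := by linarith
  have ha1 : σ - 1 ≤ 1 := by linarith
  have hane : σ - 1 ≠ 0 := ne_of_gt ha0
  set L2 : ℝ := Real.log 2 with hL2def
  set L3 : ℝ := Real.log 3 with hL3def
  have hL2a : 6931/10000 < L2 := by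
    have := Real.log_two_gt_d9; rw [hL2def]; linarith
  have hL2b : L2 < 6932/10000 := by
    have := Real.log_two_lt_d9; rw [hL2def]; linarith
  have hL3a : 1 < L3 := by
    rw [hL3def, Real.lt_log_iff_exp_lt (by norm_num)]
    have := Real.exp_one_lt_d9; linarith
  have hL3b : L3 < 11/10 := by
    rw [hL3def, Real.log_lt_iff_lt_exp (by norm_num)]
    have h := Real.sum_le_exp_of_nonneg (x := 11/10) (by norm_num) 6
    simp only [Finset.sum_range_succ, Finset.sum_range_zero] at h
    norm_num [Nat.factorial] at h
    linarith
  set X : ℝ := Real.exp (-((σ-1)*L2)) with hXdef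
  set Y : ℝ := Real.exp (-((σ-1)*L3)) with hYdef
  have hX0 : 0 < X := Real.exp_pos _
  have hY0 : 0 < Y := Real.exp_pos _
  have hX1 : 1 - (σ-1)*L2 ≤ X := by
    have := Real.add_one_le_exp (-((σ-1)*L2))
    rw [hXdef]; linarith
  have hYS : Y * (1 + (σ-1)*L3 + ((σ-1)*L3)^2/2 + ((σ-1)*L3)^3/6) ≤ 1 := by
    have hu0 : (0:ℝ) ≤ (σ-1)*L3 := mul_nonneg ha0.le (by linarith)
    have hs := Real.sum_le_exp_of_nonneg hu0 4
    simp only [Finset.sum_range_succ, Finset.sum_range_zero] at hs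
    norm_num [Nat.factorial] at hs
    have h2 : Y * (1 + (σ-1)*L3 + ((σ-1)*L3)^2/2 + ((σ-1)*L3)^3/6)
        ≤ Y * Real.exp ((σ-1)*L3) := by
      apply mul_le_mul_of_nonneg_left _ hY0.le
      linarith
    have h3 : Y * Real.exp ((σ-1)*L3) = 1 := by
      rw [hYdef, ← Real.exp_add]
      norm_num
    linarith
  -- rpow conversions
  have hexp2 : Real.exp (-Real.log 2) = 1/2 := by
    rw [Real.exp_neg, Real.exp_log (by norm_num : (0:ℝ) < 2)]
    norm_num
  have hexp3 : Real.exp (-Real.log 3) = 1/3 := by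
    rw [Real.exp_neg, Real.exp_log (by norm_num : (0:ℝ) < 3)]
    norm_num
  have hc2 : (1:ℝ)/(2:ℝ)^σ = X/2 := by
    rw [show (1:ℝ)/(2:ℝ)^σ = (2:ℝ)^(-σ) by
      rw [Real.rpow_neg (by norm_num : (0:ℝ) ≤ 2), one_div]]
    rw [Real.rpow_def_of_pos (by norm_num : (0:ℝ) < 2),
      show Real.log 2 * (-σ) = -((σ-1)*L2) + -Real.log 2 by rw [hL2def]; ring,
      Real.exp_add, hexp2, hXdef]
    ring
  have hc3 : (1:ℝ)/(3:ℝ)^σ = Y/3 := by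
    rw [show (1:ℝ)/(3:ℝ)^σ = (3:ℝ)^(-σ) by
      rw [Real.rpow_neg (by norm_num : (0:ℝ) ≤ 3), one_div]]
    rw [Real.rpow_def_of_pos (by norm_num : (0:ℝ) < 3),
      show Real.log 3 * (-σ) = -((σ-1)*L3) + -Real.log 3 by rw [hL3def]; ring,
      Real.exp_add, hexp3, hYdef]
    ring
  have hc3' : (3:ℝ)^(1-σ) = Y := by
    rw [Real.rpow_def_of_pos (by norm_num : (0:ℝ) < 3),
      show Real.log 3 * (1-σ) = -((σ-1)*L3) by rw [hL3def]; ring, hYdef]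
  have hc4 : (4:ℝ)^(1-σ) = X^2 := by
    have hlog4 : Real.log 4 = 2 * Real.log 2 := by
      rw [show (4:ℝ) = 2^(2:ℕ) by norm_num, Real.log_pow]
      push_cast; ring
    rw [Real.rpow_def_of_pos (by norm_num : (0:ℝ) < 4), hlog4,
      show 2 * Real.log 2 * (1-σ) = -((σ-1)*L2) + -((σ-1)*L2) by rw [hL2def]; ring,
      Real.exp_add, hXdef, sq]
  -- series bounds
  have hDsplit := (Summable.sum_add_tsum_nat_add 4 hDsum).symm
  have hZsplit := (Summable.sum_add_tsum_nat_add 4 hZsum).symm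
  have hfinD : ∑ i ∈ Finset.range 4, Real.log (i:ℕ) / ((i:ℕ):ℝ)^σ
      = Real.log 2/(2:ℝ)^σ + Real.log 3/(3:ℝ)^σ := by
    rw [Finset.sum_range_succ, Finset.sum_range_succ, Finset.sum_range_succ,
      Finset.sum_range_one]
    norm_num
  have hfinZ : ∑ i ∈ Finset.range 4, 1 / ((i:ℕ):ℝ)^σ
      = 1 + 1/(2:ℝ)^σ + 1/(3:ℝ)^σ := by
    rw [Finset.sum_range_succ, Finset.sum_range_succ, Finset.sum_range_succ,
      Finset.sum_range_one]
    norm_num [Real.zero_rpow (ne_of_gt hσ0), Real.one_rpow]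
  have hD_le : D ≤ Real.log 2/(2:ℝ)^σ + Real.log 3/(3:ℝ)^σ
      + ((3:ℝ)^(1-σ)*Real.log 3/(σ-1) + (3:ℝ)^(1-σ)/(σ-1)^2) := by
    rw [hDdef, hDsplit, hfinD]
    have := aux_tailD σ h1
    linarith
  have hZ_ge : 1 + 1/(2:ℝ)^σ + 1/(3:ℝ)^σ + (4:ℝ)^(1-σ)/(σ-1) ≤ Z := by
    rw [hZdef, hZsplit, hfinZ]
    have hsum4 : Summable (fun n : ℕ => 1 / ((n+4:ℕ):ℝ)^σ) :=
      (summable_nat_add_iff (f := fun n : ℕ => 1/(n:ℝ)^σ) 4).mpr hZsum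
    have := aux_tailZ σ h1 hsum4
    linarith
  -- final
  have hmain := aux_final (σ-1) L2 L3 X Y ha0 ha1 hL2a hL2b hL3a hL3b hX0 hX1 hY0 hYS
  have hq1 : Real.log 2/(2:ℝ)^σ = L2*(X/2) := by
    rw [div_eq_mul_one_div, hc2, hL2def]
  have hq2 : Real.log 3/(3:ℝ)^σ = L3*(Y/3) := by
    rw [div_eq_mul_one_div, hc3, hL3def]
  have hfin : (L2*(X/2) + L3*(Y/3) + (Y*L3/(σ-1) + Y/(σ-1)^2))*(σ-1)
      < 1 + X/2 + Y/3 + X^2/(σ-1) := by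
    rw [← mul_lt_mul_iff_left₀ ha0]
    have e1 : (L2*(X/2) + L3*(Y/3) + (Y*L3/(σ-1) + Y/(σ-1)^2))*(σ-1)*(σ-1)
        = (σ-1)^2*(L2*X/2 + L3*Y/3) + (σ-1)*L3*Y + Y := by
      field_simp
      ring
    have e2 : (1 + X/2 + Y/3 + X^2/(σ-1))*(σ-1)
        = (σ-1)*(1 + X/2 + Y/3) + X^2 := by
      field_simp
    rw [e1, e2]
    exact hmain
  calc D*(σ-1) ≤ (Real.log 2/(2:ℝ)^σ + Real.log 3/(3:ℝ)^σ
        + ((3:ℝ)^(1-σ)*Real.log 3/(σ-1) + (3:ℝ)^(1-σ)/(σ-1)^2))*(σ-1) :=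
        mul_le_mul_of_nonneg_right hD_le ha0.le
    _ = (L2*(X/2) + L3*(Y/3) + (Y*L3/(σ-1) + Y/(σ-1)^2))*(σ-1) := by
        rw [hq1, hq2, hc3', hL3def]
    _ < 1 + X/2 + Y/3 + X^2/(σ-1) := hfin
    _ = 1 + 1/(2:ℝ)^σ + 1/(3:ℝ)^σ + (4:ℝ)^(1-σ)/(σ-1) := by
        rw [hc2, hc3, hc4]
    _ ≤ Z := hZ_ge
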